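/- Let p, q, r > 1 satisfy 1/p + 1/q = 1 + 1/r, and let u, v be probability density functions on ℝ. Then ∫_ℝ ( (u^{1/p} * v^{1/q})(x) )^r dx ≤ 2^r; in particular the integral is finite. -/

import Mathlib

open MeasureTheory Real
open scoped ENNReal NNReal

/-- For `p, q, r > 1` with `1/p + 1/q = 1 + 1/r` and probability densities `u, v` on `ℝ`,
`∫ ( (u^{1/p} * v^{1/q})(x) )^r dx ≤ 2^r`; in particular the integral is finite.
(The convolution and the integral are taken in the extended nonnegative reals, so this
also expresses finiteness.) -/
theorem conv_pow_integral_le (p q r : ℝ) (hp : 1 < p) (hq : 1 < q) (hr : 1 < r)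
    (hpqr : 1/p + 1/q = 1 + 1/r) (u v : ℝ → ℝ)
    (hum : Measurable u) (hvm : Measurable v)
    (hu0 : ∀ x, 0 ≤ u x) (hv0 : ∀ x, 0 ≤ v x)
    (hui : Integrable u) (hvi : Integrable v)
    (hu1 : ∫ x, u x = 1) (hv1 : ∫ x, v x = 1) :
    ∫⁻ x, (∫⁻ y, ENNReal.ofReal (u (x - y) ^ (1/p) * v y ^ (1/q))) ^ r ≤
      ENNReal.ofReal (2 ^ r) := by
  have hp0 : (0:ℝ) < p := by linarith
  have hq0 : (0:ℝ) < q := by linarith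
  have hr0 : (0:ℝ) < r := by linarith
  set U : ℝ → ℝ≥0∞ := fun x => ENNReal.ofReal (u x) with hUdef
  set V : ℝ → ℝ≥0∞ := fun x => ENNReal.ofReal (v x) with hVdef
  have hUm : Measurable U := ENNReal.measurable_ofReal.comp hum
  have hVm : Measurable V := ENNReal.measurable_ofReal.comp hvm
  have hU1 : ∫⁻ x, U x = 1 := by
    rw [hUdef, ← ofReal_integral_eq_lintegral_ofReal hui (Filter.Eventually.of_forall hu0),
      hu1, ENNReal.ofReal_one]
  have hV1 : ∫⁻ x, V x = 1 := by
    rw [hVdef, ← ofReal_integral_eq_lintegral_ofReal hvi (Filter.Eventually.of_forall hv0),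
      hv1, ENNReal.ofReal_one]
  -- translation invariance
  have hUtrans : ∀ x : ℝ, ∫⁻ y, U (x - y) = 1 := by
    intro x
    have hneg : ∫⁻ y, U (-y) = ∫⁻ y, U y :=
      (Measure.measurePreserving_neg (volume : Measure ℝ)).lintegral_comp hUm
    calc ∫⁻ y, U (x - y) = ∫⁻ y, (fun z => U (-z)) (y - x) := by
          congr 1; funext y; simp [neg_sub]
      _ = ∫⁻ y, U (-y) := lintegral_sub_right_eq_self (fun z => U (-z)) x
      _ = 1 := by rw [hneg, hU1]
  -- rewrite integrand
  have hpt : ∀ x y, ENNReal.ofReal (u (x - y) ^ (1/p) * v y ^ (1/q))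
      = (U (x - y)) ^ (1/p) * (V y) ^ (1/q) := by
    intro x y
    rw [ENNReal.ofReal_mul (Real.rpow_nonneg (hu0 _) _),
      ENNReal.ofReal_rpow_of_nonneg (hu0 _) (by positivity),
      ENNReal.ofReal_rpow_of_nonneg (hv0 _) (by positivity)]
  -- conjugate exponent of r
  set r' : ℝ := r / (r - 1) with hr'def
  have hrr' : r.HolderConjugate r' := Real.HolderConjugate.conjExponent hr
  have hr'0 : (0:ℝ) < r' := hrr'.symm.pos
  -- exponents for second Hölder
  have hp1 : 1/p < 1 := by rw [div_lt_one hp0]; linarith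
  have hq1 : 1/q < 1 := by rw [div_lt_one hq0]; linarith
  have hp1' : (0:ℝ) < 1/p := by positivity
  have hq1' : (0:ℝ) < 1/q := by positivity
  set a : ℝ := (1 - 1/q) * r' with hadef
  set b : ℝ := (1 - 1/p) * r' with hbdef
  have ha0 : 0 < a := by
    apply mul_pos _ hr'0
    have : 1/q < 1 := by rw [div_lt_one hq0]; linarith
    linarith
  have hb0 : 0 < b := by
    apply mul_pos _ hr'0
    have : 1/p < 1 := by rw [div_lt_one hp0]; linarith
    linarith
  have hab : a + b = 1 := by
    have hr1 : r - 1 ≠ 0 := by intro h; linarith [sub_eq_zero.mp h]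
    rw [hadef, hbdef, hr'def]
    field_simp
    field_simp at hpqr
    nlinarith [hpqr]
  have ha1 : a < 1 := by linarith
  have hb1 : b < 1 := by linarith
  have hst : (1/a).HolderConjugate (1/b) := by
    rw [Real.holderConjugate_iff]; constructor
    · rw [lt_div_iff₀ ha0, one_mul]; exact ha1
    · rw [one_div, one_div, inv_inv, inv_inv]; exact hab
  -- key pointwise-in-x bound
  have key : ∀ x : ℝ, (∫⁻ y, (U (x - y)) ^ (1/p) * (V y) ^ (1/q))
      ≤ (∫⁻ y, U (x - y) * V y) ^ (1/r) := by
    intro x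
    set F : ℝ → ℝ≥0∞ := fun y => U (x - y) with hFdef
    have hFm : Measurable F := hUm.comp (measurable_const.sub measurable_id)
    have hF1 : ∫⁻ y, F y = 1 := hUtrans x
    have hsplit : ∀ y, F y ^ (1/p) * V y ^ (1/q)
        = (F y * V y) ^ (1/r) * (F y ^ (1 - 1/q) * V y ^ (1 - 1/p)) := by
      intro y
      have e1 : F y ^ ((1:ℝ)/p) = F y ^ ((1:ℝ)/r) * F y ^ (1 - 1/q) := by
        rw [← ENNReal.rpow_add_of_nonneg _ _ (by positivity : (0:ℝ) ≤ 1/r)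
          (by linarith : (0:ℝ) ≤ 1 - 1/q)]
        congr 1; linarith
      have e2 : V y ^ ((1:ℝ)/q) = V y ^ ((1:ℝ)/r) * V y ^ (1 - 1/p) := by
        rw [← ENNReal.rpow_add_of_nonneg _ _ (by positivity : (0:ℝ) ≤ 1/r)
          (by linarith : (0:ℝ) ≤ 1 - 1/p)]
        congr 1; linarith
      rw [e1, e2, ENNReal.mul_rpow_of_nonneg _ _ (by positivity : (0:ℝ) ≤ 1/r)]
      ring
    have hmeas1 : Measurable fun y => (F y * V y) ^ (1/r) :=
      (hFm.mul hVm).pow_const _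
    have hmeas2 : Measurable fun y => F y ^ (1 - 1/q) * V y ^ (1 - 1/p) :=
      (hFm.pow_const _).mul (hVm.pow_const _)
    have step2 : (∫⁻ y, (F y ^ (1 - 1/q) * V y ^ (1 - 1/p)) ^ r') ≤ 1 := by
      have heq : ∀ y, (F y ^ (1 - 1/q) * V y ^ (1 - 1/p)) ^ r' = F y ^ a * V y ^ b := by
        intro y
        rw [ENNReal.mul_rpow_of_nonneg _ _ hr'0.le, ← ENNReal.rpow_mul, ← ENNReal.rpow_mul]
      have hH := ENNReal.lintegral_mul_le_Lp_mul_Lq (volume : Measure ℝ) hst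
        ((hFm.pow_const a).aemeasurable) ((hVm.pow_const b).aemeasurable)
      calc (∫⁻ y, (F y ^ (1 - 1/q) * V y ^ (1 - 1/p)) ^ r')
          = ∫⁻ y, F y ^ a * V y ^ b := by simp_rw [heq]
        _ ≤ (∫⁻ y, (F y ^ a) ^ (1/a)) ^ (1/(1/a)) * (∫⁻ y, (V y ^ b) ^ (1/b)) ^ (1/(1/b)) := hH
        _ = 1 := by
            simp_rw [← ENNReal.rpow_mul,
              mul_one_div_cancel (ne_of_gt ha0), mul_one_div_cancel (ne_of_gt hb0),
              ENNReal.rpow_one]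
            rw [hF1, hV1, ENNReal.one_rpow, ENNReal.one_rpow, one_mul]
    calc (∫⁻ y, F y ^ (1/p) * V y ^ (1/q))
        = ∫⁻ y, (F y * V y) ^ (1/r) * (F y ^ (1 - 1/q) * V y ^ (1 - 1/p)) := by
          simp_rw [hsplit]
      _ ≤ (∫⁻ y, ((F y * V y) ^ (1/r)) ^ r) ^ (1/r)
          * (∫⁻ y, (F y ^ (1 - 1/q) * V y ^ (1 - 1/p)) ^ r') ^ (1/r') :=
          ENNReal.lintegral_mul_le_Lp_mul_Lq (volume : Measure ℝ) hrr'
            hmeas1.aemeasurable hmeas2.aemeasurable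
      _ ≤ (∫⁻ y, ((F y * V y) ^ (1/r)) ^ r) ^ (1/r) * 1 ^ (1/r') := by
          exact mul_le_mul_right (ENNReal.rpow_le_rpow step2 (le_of_lt (by positivity : (0:ℝ) < 1/r'))) _
      _ = (∫⁻ y, F y * V y) ^ (1/r) := by
          rw [ENNReal.one_rpow, mul_one]
          congr 1
          refine lintegral_congr fun y => ?_
          rw [← ENNReal.rpow_mul, one_div_mul_cancel (ne_of_gt hr0), ENNReal.rpow_one]
  -- now the outer integral
  have houter : (∫⁻ x, (∫⁻ y, U (x - y) * V y)) = 1 := by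
    rw [lintegral_lintegral_swap]
    · have : ∀ y : ℝ, (∫⁻ x, U (x - y) * V y) = V y := by
        intro y
        rw [lintegral_mul_const' (V y) _ ENNReal.ofReal_ne_top,
          lintegral_sub_right_eq_self U y, hU1, one_mul]
      simp_rw [this, hV1]
    · have hm : Measurable fun z : ℝ × ℝ => U (z.1 - z.2) * V z.2 :=
        (hUm.comp (measurable_fst.sub measurable_snd)).mul (hVm.comp measurable_snd)
      exact hm.aemeasurable
  calc ∫⁻ x, (∫⁻ y, ENNReal.ofReal (u (x - y) ^ (1/p) * v y ^ (1/q))) ^ r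
      = ∫⁻ x, (∫⁻ y, (U (x - y)) ^ (1/p) * (V y) ^ (1/q)) ^ r := by
        simp_rw [hpt]
    _ ≤ ∫⁻ x, ((∫⁻ y, U (x - y) * V y) ^ (1/r)) ^ r := by
        refine lintegral_mono fun x => ?_
        exact ENNReal.rpow_le_rpow (key x) hr0.le
    _ = ∫⁻ x, (∫⁻ y, U (x - y) * V y) := by
        refine lintegral_congr fun x => ?_
        rw [← ENNReal.rpow_mul, one_div_mul_cancel (ne_of_gt hr0), ENNReal.rpow_one]
    _ = 1 := houter
    _ ≤ ENNReal.ofReal (2 ^ r) := by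
        rw [show (1:ℝ≥0∞) = ENNReal.ofReal 1 by simp]
        exact ENNReal.ofReal_le_ofReal (Real.one_le_rpow one_le_two hr0.le)
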